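/- For n ≥ 1 real numbers p₁,…,p_n and angles φ₁,…,φ_n, and nonnegative integers k, l, define F((p₁,φ₁),…,(p_n,φ_n); k, l) = e^{−(1/4)Σ_{j=1}^n p_j² − (1/2)Σ_{1≤i<j≤n} p_i p_j e^{i(φ_i−φ_j)}} · Σ_{r=0}^{min(k,l)} (√(k!·l!)/(r!·(k−r)!·(l−r)!)) · b^{k−r}·a^{l−r}, where a = −(i/√2)·Σ_{j=1}^n p_j e^{iφ_j} and b = −(i/√2)·Σ_{j=1}^n p_j e^{−iφ_j}. Then for all real p₁,…,p_{n+1} with p_j ≠ 0 for all j, all angles φ₁,…,φ_{n+1}, and all nonnegative integers k, l, the series Σ_{m=0}^∞ F((p₁,φ₁),…,(p_n,φ_n); k, m) · F((p_{n+1},φ_{n+1}); m, l) converges absolutely and equals F((p₁,φ₁),…,(p_{n+1},φ_{n+1}); k, l). -/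

import Mathlib

open scoped BigOperators

/-- `a = −(i/√2)·Σ_j p_j·e^{iφ_j}`. -/
noncomputable def aCoef (n : ℕ) (p φ : Fin n → ℝ) : ℂ :=
  -(Complex.I / ((Real.sqrt 2 : ℝ) : ℂ)) *
    ∑ j, ((p j : ℝ) : ℂ) * Complex.exp (Complex.I * ((φ j : ℝ) : ℂ))

/-- `b = −(i/√2)·Σ_j p_j·e^{−iφ_j}`. -/
noncomputable def bCoef (n : ℕ) (p φ : Fin n → ℝ) : ℂ :=
  -(Complex.I / ((Real.sqrt 2 : ℝ) : ℂ)) *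
    ∑ j, ((p j : ℝ) : ℂ) * Complex.exp (-Complex.I * ((φ j : ℝ) : ℂ))

/-- The limit matrix element
`F((p₁,φ₁),…,(p_n,φ_n); k, l) = e^{−(1/4)Σ_j p_j² − (1/2)Σ_{i<j} p_i p_j e^{i(φ_i−φ_j)}}·
Σ_{r=0}^{min(k,l)} (√(k!·l!)/(r!·(k−r)!·(l−r)!))·b^{k−r}·a^{l−r}`. -/
noncomputable def limF (n : ℕ) (p φ : Fin n → ℝ) (k l : ℕ) : ℂ :=
  Complex.exp
      (-(1 / 4 : ℂ) * ∑ j, ((p j : ℝ) : ℂ) ^ 2 -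
        (1 / 2 : ℂ) * ∑ j : Fin n, ∑ i : Fin n,
          if i < j then
            ((p i : ℝ) : ℂ) * ((p j : ℝ) : ℂ) *
              Complex.exp (Complex.I * (((φ i : ℝ) : ℂ) - ((φ j : ℝ) : ℂ)))
          else 0) *
    ∑ r ∈ Finset.range (min k l + 1),
      ((Real.sqrt (k.factorial * l.factorial) : ℝ) : ℂ) /
          ((r.factorial : ℂ) * ((k - r).factorial : ℂ) * ((l - r).factorial : ℂ)) *
        bCoef n p φ ^ (k - r) * aCoef n p φ ^ (l - r)


open Finset

lemma vanderN (m r s : ℕ) (hr : r ≤ m) (hs : s ≤ m) :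
    ∑ t ∈ range (min r s + 1),
      (if r + s - t ≤ m then s.choose t * (m - s).choose (r - t) else 0) = m.choose r := by
  have h1 : ∑ t ∈ range (min r s + 1),
      (if r + s - t ≤ m then s.choose t * (m - s).choose (r - t) else 0)
      = ∑ t ∈ range (min r s + 1), s.choose t * (m - s).choose (r - t) := by
    refine Finset.sum_congr rfl fun t ht => ?_
    by_cases hP : r + s - t ≤ m
    · simp [hP]
    · simp only [if_neg hP]
      have ht' : t ≤ min r s := by simpa [Nat.lt_succ_iff] using Finset.mem_range.mp ht
      have : m - s < r - t := by omega
      rw [Nat.choose_eq_zero_of_lt this, mul_zero]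
  rw [h1]
  have h2 : ∑ t ∈ range (min r s + 1), s.choose t * (m - s).choose (r - t)
      = ∑ t ∈ range (r + 1), s.choose t * (m - s).choose (r - t) := by
    refine Finset.sum_subset (Finset.range_subset_range.mpr (by omega)) ?_
    intro t ht hnt
    have : s < t := by
      simp only [Finset.mem_range, Nat.lt_succ_iff] at ht hnt; omega
    rw [Nat.choose_eq_zero_of_lt this, zero_mul]
  rw [h2]
  have := Nat.add_choose_eq s (m - s) r
  rw [Finset.Nat.sum_antidiagonal_eq_sum_range_succ_mk] at this
  have hms : s + (m - s) = m := by omega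
  rw [hms] at this
  exact this.symm

lemma fact_ne (n : ℕ) : ((n.factorial : ℂ)) ≠ 0 :=
  Nat.cast_ne_zero.mpr (Nat.factorial_ne_zero n)

lemma vanderC (m r s : ℕ) (hr : r ≤ m) (hs : s ≤ m) :
    ∑ t ∈ range (min r s + 1),
      (if r + s - t ≤ m then
        ((r.factorial : ℂ) * s.factorial) /
          ((t.factorial : ℂ) * ((r - t).factorial : ℂ) * ((s - t).factorial : ℂ) *
            ((m - (r + s - t)).factorial : ℂ))
       else 0)
    = (m.factorial : ℂ) / (((m - r).factorial : ℂ) * ((m - s).factorial : ℂ)) := by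
  have key : ∀ t ∈ range (min r s + 1),
      (if r + s - t ≤ m then
        ((r.factorial : ℂ) * s.factorial) /
          ((t.factorial : ℂ) * ((r - t).factorial : ℂ) * ((s - t).factorial : ℂ) *
            ((m - (r + s - t)).factorial : ℂ))
       else 0)
      = ((if r + s - t ≤ m then s.choose t * (m - s).choose (r - t) else 0 : ℕ) : ℂ) *
          ((r.factorial : ℂ) / ((m - s).factorial : ℂ)) := by
    intro t ht
    have ht' : t ≤ min r s := by simpa [Nat.lt_succ_iff] using Finset.mem_range.mp ht
    by_cases hP : r + s - t ≤ m
    · rw [if_pos hP, if_pos hP]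
      have e1 : ((s.choose t : ℕ) : ℂ) = (s.factorial : ℂ) / ((t.factorial : ℂ) * ((s - t).factorial : ℂ)) :=
        Nat.cast_choose ℂ (by omega)
      have e2 : (((m - s).choose (r - t) : ℕ) : ℂ)
          = ((m - s).factorial : ℂ) / (((r - t).factorial : ℂ) * ((m - s - (r - t)).factorial : ℂ)) :=
        Nat.cast_choose ℂ (by omega)
      have e3 : m - (r + s - t) = m - s - (r - t) := by omega
      push_cast
      rw [e1, e2, e3]
      field_simp [fact_ne]
      exact (mul_div_mul_right _ _ (fact_ne _)).symm
    · simp [hP]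
  rw [Finset.sum_congr rfl key, ← Finset.sum_mul, ← Nat.cast_sum, vanderN m r s hr hs,
    Nat.cast_choose ℂ hr]
  field_simp [fact_ne]
  rw [mul_assoc (r.factorial : ℂ), mul_comm (m.factorial : ℂ), mul_div_mul_left _ _ (fact_ne r)]

lemma hasSum_exp_shift (x C : ℂ) (N : ℕ) :
    HasSum (fun m : ℕ => if N ≤ m then C * (x ^ (m - N) / ((m - N).factorial : ℂ)) else 0)
      (C * Complex.exp x) := by
  have hx : HasSum (fun u : ℕ => C * (x ^ u / (u.factorial : ℂ))) (C * Complex.exp x) := by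
    refine HasSum.mul_left C ?_
    rw [Complex.exp_eq_exp_ℂ]
    exact NormedSpace.expSeries_div_hasSum_exp x
  have hinj : Function.Injective (fun u : ℕ => u + N) := fun u v h => by simpa using h
  rw [← Function.Injective.hasSum_iff hinj (f := fun m : ℕ =>
      if N ≤ m then C * (x ^ (m - N) / ((m - N).factorial : ℂ)) else 0)]
  · convert hx using 2 with u
    simp
  · intro m hm
    have : ¬ N ≤ m := by
      intro h
      exact hm ⟨m - N, by simp; omega⟩
    simp [this]

lemma hasSum_key (a d : ℂ) (r s : ℕ) :
    HasSum (fun m : ℕ => if r ≤ m ∧ s ≤ m then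
        (m.factorial : ℂ) / (((m - r).factorial : ℂ) * ((m - s).factorial : ℂ))
          * a ^ (m - r) * d ^ (m - s) else 0)
      (Complex.exp (a * d) *
        ∑ t ∈ range (min r s + 1),
          ((r.factorial : ℂ) * (s.factorial : ℂ)) /
            ((t.factorial : ℂ) * ((r - t).factorial : ℂ) * ((s - t).factorial : ℂ))
            * a ^ (s - t) * d ^ (r - t)) := by
  -- define the per-t coefficient
  set C : ℕ → ℂ := fun t =>
    ((r.factorial : ℂ) * (s.factorial : ℂ)) /
      ((t.factorial : ℂ) * ((r - t).factorial : ℂ) * ((s - t).factorial : ℂ))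
      * a ^ (s - t) * d ^ (r - t) with hC
  have hsum : HasSum (fun m : ℕ => ∑ t ∈ range (min r s + 1),
      (if r + s - t ≤ m then C t * ((a * d) ^ (m - (r + s - t)) / ((m - (r + s - t)).factorial : ℂ)) else 0))
      (∑ t ∈ range (min r s + 1), C t * Complex.exp (a * d)) := by
    exact hasSum_sum (fun t _ => hasSum_exp_shift (a * d) (C t) (r + s - t))
  have hval : (∑ t ∈ range (min r s + 1), C t * Complex.exp (a * d))
      = Complex.exp (a * d) * ∑ t ∈ range (min r s + 1), C t := by
    rw [← Finset.sum_mul, mul_comm]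
  rw [hval] at hsum
  convert hsum using 1
  funext m
  -- pointwise identity
  by_cases hm : r ≤ m ∧ s ≤ m
  · rw [if_pos hm]
    have step : ∀ t ∈ range (min r s + 1),
        (if r + s - t ≤ m then C t * ((a * d) ^ (m - (r + s - t)) / ((m - (r + s - t)).factorial : ℂ)) else 0)
        = (if r + s - t ≤ m then
            ((r.factorial : ℂ) * s.factorial) /
              ((t.factorial : ℂ) * ((r - t).factorial : ℂ) * ((s - t).factorial : ℂ) *
                ((m - (r + s - t)).factorial : ℂ))
           else 0) * (a ^ (m - r) * d ^ (m - s)) := by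
      intro t ht
      have ht' : t ≤ min r s := by simpa [Nat.lt_succ_iff] using Finset.mem_range.mp ht
      by_cases hP : r + s - t ≤ m
      · rw [if_pos hP, if_pos hP, hC]
        have ea : a ^ (s - t) * a ^ (m - (r + s - t)) = a ^ (m - r) := by
          rw [← pow_add]; congr 1; omega
        have ed : d ^ (r - t) * d ^ (m - (r + s - t)) = d ^ (m - s) := by
          rw [← pow_add]; congr 1; omega
        rw [mul_pow]
        rw [← ea, ← ed]
        field_simp [fact_ne]
      · simp [hP]
    rw [Finset.sum_congr rfl step, ← Finset.sum_mul, vanderC m r s hm.1 hm.2]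
    ring
  · rw [if_neg hm]
    refine (Finset.sum_eq_zero fun t ht => ?_).symm
    have ht' : t ≤ min r s := by simpa [Nat.lt_succ_iff] using Finset.mem_range.mp ht
    have : ¬ (r + s - t ≤ m) := by omega
    simp [this]

noncomputable def uF (a b : ℂ) (k l : ℕ) : ℂ :=
  ∑ r ∈ range (min k l + 1),
    b ^ (k - r) * a ^ (l - r) /
      ((r.factorial : ℂ) * ((k - r).factorial : ℂ) * ((l - r).factorial : ℂ))

lemma FIN (a b c d : ℂ) (k l : ℕ) :
    ∑ r ∈ range (k + 1), ∑ s ∈ range (l + 1),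
      (∑ t ∈ range (min r s + 1),
          ((r.factorial : ℂ) * (s.factorial : ℂ)) /
            ((t.factorial : ℂ) * ((r - t).factorial : ℂ) * ((s - t).factorial : ℂ))
            * a ^ (s - t) * d ^ (r - t)) *
        (b ^ (k - r) * c ^ (l - s) /
          ((r.factorial : ℂ) * ((k - r).factorial : ℂ) * (s.factorial : ℂ) * ((l - s).factorial : ℂ)))
      = uF (a + c) (b + d) k l := by
  have rhs : uF (a + c) (b + d) k l
      = ∑ t ∈ range (min k l + 1), ∑ α ∈ range (k - t + 1), ∑ β ∈ range (l - t + 1),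
          (((k - t).choose α : ℂ) * ((l - t).choose β : ℂ)) /
            ((t.factorial : ℂ) * ((k - t).factorial : ℂ) * ((l - t).factorial : ℂ)) *
            (b ^ α * d ^ (k - t - α)) * (a ^ β * c ^ (l - t - β)) := by
    unfold uF
    refine Finset.sum_congr rfl fun t ht => ?_
    rw [add_pow, add_pow, Finset.sum_mul_sum, Finset.sum_div]
    refine Finset.sum_congr rfl fun α hα => ?_
    rw [Finset.sum_div]
    refine Finset.sum_congr rfl fun β hβ => ?_
    push_cast
    ring
  rw [rhs]
  -- push the constant factor inside the t-sum on the left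
  have lhs' : ∀ r ∈ range (k + 1), ∀ s ∈ range (l + 1),
      (∑ t ∈ range (min r s + 1),
          ((r.factorial : ℂ) * (s.factorial : ℂ)) /
            ((t.factorial : ℂ) * ((r - t).factorial : ℂ) * ((s - t).factorial : ℂ))
            * a ^ (s - t) * d ^ (r - t)) *
        (b ^ (k - r) * c ^ (l - s) /
          ((r.factorial : ℂ) * ((k - r).factorial : ℂ) * (s.factorial : ℂ) * ((l - s).factorial : ℂ)))
      = ∑ t ∈ range (min r s + 1),
          ((r.factorial : ℂ) * (s.factorial : ℂ)) /
            ((t.factorial : ℂ) * ((r - t).factorial : ℂ) * ((s - t).factorial : ℂ))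
            * a ^ (s - t) * d ^ (r - t) *
          (b ^ (k - r) * c ^ (l - s) /
            ((r.factorial : ℂ) * ((k - r).factorial : ℂ) * (s.factorial : ℂ) * ((l - s).factorial : ℂ))) :=
    fun r _ s _ => Finset.sum_mul _ _ _
  rw [Finset.sum_congr rfl fun r hr => Finset.sum_congr rfl fun s hs => lhs' r hr s hs]
  -- convert both sides to sums over sigma types
  have L : ∑ r ∈ range (k + 1), ∑ s ∈ range (l + 1), ∑ t ∈ range (min r s + 1),
        ((r.factorial : ℂ) * (s.factorial : ℂ)) /
          ((t.factorial : ℂ) * ((r - t).factorial : ℂ) * ((s - t).factorial : ℂ))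
          * a ^ (s - t) * d ^ (r - t) *
        (b ^ (k - r) * c ^ (l - s) /
          ((r.factorial : ℂ) * ((k - r).factorial : ℂ) * (s.factorial : ℂ) * ((l - s).factorial : ℂ)))
      = ∑ x ∈ (range (k + 1)).sigma
          (fun r => (range (l + 1)).sigma fun s => range (min r s + 1)),
          ((x.1.factorial : ℂ) * (x.2.1.factorial : ℂ)) /
            ((x.2.2.factorial : ℂ) * ((x.1 - x.2.2).factorial : ℂ) * ((x.2.1 - x.2.2).factorial : ℂ))
            * a ^ (x.2.1 - x.2.2) * d ^ (x.1 - x.2.2) *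
          (b ^ (k - x.1) * c ^ (l - x.2.1) /
            ((x.1.factorial : ℂ) * ((k - x.1).factorial : ℂ) * (x.2.1.factorial : ℂ) *
              ((l - x.2.1).factorial : ℂ))) := by
    rw [Finset.sum_sigma]
    refine Finset.sum_congr rfl fun r hr => ?_
    rw [Finset.sum_sigma]
  have R : ∑ t ∈ range (min k l + 1), ∑ α ∈ range (k - t + 1), ∑ β ∈ range (l - t + 1),
        (((k - t).choose α : ℂ) * ((l - t).choose β : ℂ)) /
          ((t.factorial : ℂ) * ((k - t).factorial : ℂ) * ((l - t).factorial : ℂ)) *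
          (b ^ α * d ^ (k - t - α)) * (a ^ β * c ^ (l - t - β))
      = ∑ y ∈ (range (min k l + 1)).sigma
          (fun t => (range (k - t + 1)).sigma fun α => range (l - t + 1)),
          (((k - y.1).choose y.2.1 : ℂ) * ((l - y.1).choose y.2.2 : ℂ)) /
            ((y.1.factorial : ℂ) * ((k - y.1).factorial : ℂ) * ((l - y.1).factorial : ℂ)) *
            (b ^ y.2.1 * d ^ (k - y.1 - y.2.1)) * (a ^ y.2.2 * c ^ (l - y.1 - y.2.2)) := by
    rw [Finset.sum_sigma]
    refine Finset.sum_congr rfl fun t ht => ?_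
    rw [Finset.sum_sigma]
  rw [L, R]
  refine Finset.sum_nbij'
    (fun x => (⟨x.2.2, ⟨k - x.1, x.2.1 - x.2.2⟩⟩ : Σ t : ℕ, Σ α : ℕ, ℕ))
    (fun y => (⟨k - y.2.1, ⟨y.2.2 + y.1, y.1⟩⟩ : Σ r : ℕ, Σ s : ℕ, ℕ))
    ?_ ?_ ?_ ?_ ?_
  · rintro ⟨r, s, t⟩ hx
    simp only [Finset.mem_sigma, Finset.mem_range, Nat.lt_succ_iff] at hx ⊢
    omega
  · rintro ⟨t, α, β⟩ hy
    simp only [Finset.mem_sigma, Finset.mem_range, Nat.lt_succ_iff] at hy ⊢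
    omega
  · rintro ⟨r, s, t⟩ hx
    simp only [Finset.mem_sigma, Finset.mem_range, Nat.lt_succ_iff] at hx
    have h1 : k - (k - r) = r := by omega
    have h2 : s - t + t = s := by omega
    simp only [h1, h2]
  · rintro ⟨t, α, β⟩ hy
    simp only [Finset.mem_sigma, Finset.mem_range, Nat.lt_succ_iff] at hy
    have h1 : k - (k - α) = α := by omega
    have h2 : β + t - t = β := by omega
    simp only [h1, h2]
  · rintro ⟨r, s, t⟩ hx
    simp only [Finset.mem_sigma, Finset.mem_range, Nat.lt_succ_iff] at hx
    obtain ⟨hr, hs, ht⟩ := hx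
    have e1 : k - t - (k - r) = r - t := by omega
    have e2 : l - t - (s - t) = l - s := by omega
    have c1 : (((k - t).choose (k - r) : ℕ) : ℂ)
        = ((k - t).factorial : ℂ) / (((k - r).factorial : ℂ) * ((r - t).factorial : ℂ)) := by
      rw [Nat.cast_choose ℂ (by omega : k - r ≤ k - t),
        show k - t - (k - r) = r - t from by omega]
    have c2 : (((l - t).choose (s - t) : ℕ) : ℂ)
        = ((l - t).factorial : ℂ) / (((s - t).factorial : ℂ) * ((l - s).factorial : ℂ)) := by
      rw [Nat.cast_choose ℂ (by omega : s - t ≤ l - t),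
        show l - t - (s - t) = l - s from by omega]
    simp only [e1, e2, c1, c2]
    have hne : ∀ (x y : ℕ), ((x.factorial : ℂ) * (y.factorial : ℂ)) ≠ 0 :=
      fun x y => mul_ne_zero (fact_ne x) (fact_ne y)
    have h1 := fact_ne r
    have h2 := fact_ne s
    have h3 := fact_ne t
    have h4 := fact_ne (r - t)
    have h5 := fact_ne (s - t)
    have h6 := fact_ne (k - r)
    have h7 := fact_ne (l - s)
    have h8 := fact_ne (k - t)
    have h9 := fact_ne (l - t)
    field_simp

/-- the key summand -/
noncomputable def keyfun (a d : ℂ) (r s m : ℕ) : ℂ :=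
  if r ≤ m ∧ s ≤ m then
    (m.factorial : ℂ) / (((m - r).factorial : ℂ) * ((m - s).factorial : ℂ))
      * a ^ (m - r) * d ^ (m - s) else 0

noncomputable def Kconst (b c : ℂ) (k l r s : ℕ) : ℂ :=
  b ^ (k - r) * c ^ (l - s) /
    ((r.factorial : ℂ) * ((k - r).factorial : ℂ) * (s.factorial : ℂ) * ((l - s).factorial : ℂ))

lemma uF_ext₁ (a b : ℂ) (k m : ℕ) :
    uF a b k m = ∑ r ∈ range (k + 1),
      (if r ≤ m then b ^ (k - r) * a ^ (m - r) /
        ((r.factorial : ℂ) * ((k - r).factorial : ℂ) * ((m - r).factorial : ℂ)) else 0) := by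
  unfold uF
  have step : ∀ r ∈ range (min k m + 1), b ^ (k - r) * a ^ (m - r) /
        ((r.factorial : ℂ) * ((k - r).factorial : ℂ) * ((m - r).factorial : ℂ))
      = (if r ≤ m then b ^ (k - r) * a ^ (m - r) /
          ((r.factorial : ℂ) * ((k - r).factorial : ℂ) * ((m - r).factorial : ℂ)) else 0) := by
    intro r hr
    simp only [Finset.mem_range, Nat.lt_succ_iff] at hr
    rw [if_pos (by omega)]
  rw [Finset.sum_congr rfl step]
  refine Finset.sum_subset (Finset.range_subset_range.mpr (by omega)) fun r hr hnr => ?_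
  simp only [Finset.mem_range, Nat.lt_succ_iff] at hr hnr
  rw [if_neg (by omega)]

lemma uF_ext₂ (a b : ℂ) (k m : ℕ) :
    uF a b m k = ∑ r ∈ range (k + 1),
      (if r ≤ m then b ^ (m - r) * a ^ (k - r) /
        ((r.factorial : ℂ) * ((m - r).factorial : ℂ) * ((k - r).factorial : ℂ)) else 0) := by
  unfold uF
  have step : ∀ r ∈ range (min m k + 1), b ^ (m - r) * a ^ (k - r) /
        ((r.factorial : ℂ) * ((m - r).factorial : ℂ) * ((k - r).factorial : ℂ))
      = (if r ≤ m then b ^ (m - r) * a ^ (k - r) /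
          ((r.factorial : ℂ) * ((m - r).factorial : ℂ) * ((k - r).factorial : ℂ)) else 0) := by
    intro r hr
    simp only [Finset.mem_range, Nat.lt_succ_iff] at hr
    rw [if_pos (by omega)]
  rw [Finset.sum_congr rfl step]
  refine Finset.sum_subset (Finset.range_subset_range.mpr (by omega)) fun r hr hnr => ?_
  simp only [Finset.mem_range, Nat.lt_succ_iff] at hr hnr
  rw [if_neg (by omega)]

lemma prod_expand (a b c d : ℂ) (k l m : ℕ) :
    (m.factorial : ℂ) * uF a b k m * uF c d m l
      = ∑ r ∈ range (k + 1), ∑ s ∈ range (l + 1),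
          keyfun a d r s m * Kconst b c k l r s := by
  rw [uF_ext₁ a b k m, uF_ext₂ c d l m, Finset.mul_sum]
  have step : ∀ i ∈ range (l + 1),
      ((m.factorial : ℂ) *
          ∑ r ∈ range (k + 1),
            (if r ≤ m then b ^ (k - r) * a ^ (m - r) /
              ((r.factorial : ℂ) * ((k - r).factorial : ℂ) * ((m - r).factorial : ℂ)) else 0)) *
        (if i ≤ m then d ^ (m - i) * c ^ (l - i) /
          ((i.factorial : ℂ) * ((m - i).factorial : ℂ) * ((l - i).factorial : ℂ)) else 0)
      = ∑ r ∈ range (k + 1), ((m.factorial : ℂ) *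
          (if r ≤ m then b ^ (k - r) * a ^ (m - r) /
            ((r.factorial : ℂ) * ((k - r).factorial : ℂ) * ((m - r).factorial : ℂ)) else 0)) *
        (if i ≤ m then d ^ (m - i) * c ^ (l - i) /
          ((i.factorial : ℂ) * ((m - i).factorial : ℂ) * ((l - i).factorial : ℂ)) else 0) := by
    intro i _
    rw [Finset.mul_sum, Finset.sum_mul]
  rw [Finset.sum_congr rfl step, Finset.sum_comm]
  refine Finset.sum_congr rfl fun r hr => ?_
  refine Finset.sum_congr rfl fun s hs => ?_
  unfold keyfun Kconst
  by_cases h1 : r ≤ m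
  · by_cases h2 : s ≤ m
    · rw [if_pos h1, if_pos h2, if_pos ⟨h1, h2⟩]
      ring
    · rw [if_pos h1, if_neg h2, if_neg (by tauto)]
      ring
  · by_cases h2 : s ≤ m
    · rw [if_neg h1, if_pos h2, if_neg (by tauto)]
      ring
    · rw [if_neg h1, if_neg h2, if_neg (by tauto)]
      ring

lemma core (a b c d : ℂ) (k l : ℕ) :
    HasSum (fun m : ℕ => (m.factorial : ℂ) * uF a b k m * uF c d m l)
      (Complex.exp (a * d) * uF (a + c) (b + d) k l) := by
  have h1 : ∀ r s : ℕ, HasSum (fun m => keyfun a d r s m * Kconst b c k l r s)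
      ((Complex.exp (a * d) *
        ∑ t ∈ range (min r s + 1),
          ((r.factorial : ℂ) * (s.factorial : ℂ)) /
            ((t.factorial : ℂ) * ((r - t).factorial : ℂ) * ((s - t).factorial : ℂ))
            * a ^ (s - t) * d ^ (r - t)) * Kconst b c k l r s) :=
    fun r s => (hasSum_key a d r s).mul_right _
  have h2 := hasSum_sum (f := fun (p : ℕ × ℕ) (m : ℕ) => keyfun a d p.1 p.2 m * Kconst b c k l p.1 p.2)
    (s := Finset.range (k+1) ×ˢ Finset.range (l+1)) (fun p _ => h1 p.1 p.2)
  convert h2 using 1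
  · funext m
    rw [prod_expand, ← Finset.sum_product']
  · rw [Finset.sum_product]
    rw [← FIN a b c d k l, Finset.mul_sum]
    refine Finset.sum_congr rfl fun r hr => ?_
    rw [Finset.mul_sum]
    refine Finset.sum_congr rfl fun s hs => ?_
    unfold Kconst
    ring

lemma keyfun_norm_summable (a d : ℂ) (r s : ℕ) :
    Summable (fun m : ℕ => ‖keyfun a d r s m‖) := by
  have hg : Summable (fun m : ℕ => keyfun ((‖a‖ : ℝ) : ℂ) ((‖d‖ : ℝ) : ℂ) r s m) :=
    (hasSum_key ((‖a‖ : ℝ) : ℂ) ((‖d‖ : ℝ) : ℂ) r s).summable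
  have hre : Summable (fun m : ℕ => (keyfun ((‖a‖ : ℝ) : ℂ) ((‖d‖ : ℝ) : ℂ) r s m).re) :=
    (Complex.hasSum_re hg.hasSum).summable
  refine hre.congr fun m => ?_
  unfold keyfun
  by_cases h : r ≤ m ∧ s ≤ m
  · rw [if_pos h, if_pos h]
    have : ((m.factorial : ℂ) / (((m - r).factorial : ℂ) * ((m - s).factorial : ℂ))
        * ((‖a‖ : ℝ) : ℂ) ^ (m - r) * ((‖d‖ : ℝ) : ℂ) ^ (m - s))
        = (((m.factorial : ℝ) / (((m - r).factorial : ℝ) * ((m - s).factorial : ℝ))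
            * ‖a‖ ^ (m - r) * ‖d‖ ^ (m - s) : ℝ) : ℂ) := by
      push_cast
      ring
    rw [this, Complex.ofReal_re]
    rw [norm_mul, norm_mul, norm_div, norm_pow, norm_pow]
    simp [Complex.norm_natCast, abs_of_nonneg]
  · rw [if_neg h, if_neg h]
    simp

lemma core_norm (a b c d : ℂ) (k l : ℕ) :
    Summable (fun m : ℕ => ‖(m.factorial : ℂ) * uF a b k m * uF c d m l‖) := by
  have hb : ∀ m : ℕ, ‖(m.factorial : ℂ) * uF a b k m * uF c d m l‖
      ≤ ∑ p ∈ Finset.range (k+1) ×ˢ Finset.range (l+1),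
          ‖keyfun a d p.1 p.2 m * Kconst b c k l p.1 p.2‖ := by
    intro m
    rw [prod_expand, ← Finset.sum_product']
    exact norm_sum_le _ _
  refine Summable.of_nonneg_of_le (fun m => norm_nonneg _) hb (summable_sum fun p _ => ?_)
  have := (keyfun_norm_summable a d p.1 p.2).mul_right ‖Kconst b c k l p.1 p.2‖
  refine this.congr fun m => ?_
  rw [norm_mul]

noncomputable def Eexp (n : ℕ) (p φ : Fin n → ℝ) : ℂ :=
  -(1 / 4 : ℂ) * ∑ j, ((p j : ℝ) : ℂ) ^ 2 -
    (1 / 2 : ℂ) * ∑ j : Fin n, ∑ i : Fin n,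
      if i < j then
        ((p i : ℝ) : ℂ) * ((p j : ℝ) : ℂ) *
          Complex.exp (Complex.I * (((φ i : ℝ) : ℂ) - ((φ j : ℝ) : ℂ)))
      else 0

lemma limF_eq (n : ℕ) (p φ : Fin n → ℝ) (k l : ℕ) :
    limF n p φ k l = Complex.exp (Eexp n p φ) *
      ((Real.sqrt (k.factorial * l.factorial) : ℝ) : ℂ) *
        uF (aCoef n p φ) (bCoef n p φ) k l := by
  unfold limF Eexp uF
  rw [mul_assoc]
  congr 1
  rw [Finset.mul_sum]
  exact Finset.sum_congr rfl fun r _ => by ring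

lemma sqrt_fact_mul (k m l : ℕ) :
    ((Real.sqrt (k.factorial * m.factorial) : ℝ) : ℂ) *
      ((Real.sqrt (m.factorial * l.factorial) : ℝ) : ℂ)
    = (m.factorial : ℂ) * ((Real.sqrt (k.factorial * l.factorial) : ℝ) : ℂ) := by
  rw [← Complex.ofReal_mul]
  rw [← Real.sqrt_mul (by positivity)]
  rw [show ((k.factorial : ℝ) * m.factorial) * ((m.factorial : ℝ) * l.factorial)
      = ((m.factorial : ℝ)) ^ 2 * ((k.factorial : ℝ) * l.factorial) from by ring]
  rw [Real.sqrt_mul (by positivity), Real.sqrt_sq (by positivity)]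
  push_cast
  ring

lemma aCoef_succ (n : ℕ) (p φ : Fin (n + 1) → ℝ) :
    aCoef (n + 1) p φ = aCoef n (fun j => p j.castSucc) (fun j => φ j.castSucc) +
      aCoef 1 (fun _ => p (Fin.last n)) (fun _ => φ (Fin.last n)) := by
  unfold aCoef
  rw [Fin.sum_univ_castSucc, mul_add]
  congr 1
  rw [Fin.sum_univ_one]

lemma bCoef_succ (n : ℕ) (p φ : Fin (n + 1) → ℝ) :
    bCoef (n + 1) p φ = bCoef n (fun j => p j.castSucc) (fun j => φ j.castSucc) +
      bCoef 1 (fun _ => p (Fin.last n)) (fun _ => φ (Fin.last n)) := by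
  unfold bCoef
  rw [Fin.sum_univ_castSucc, mul_add]
  congr 1
  rw [Fin.sum_univ_one]

lemma sqrt2_sq : ((Real.sqrt 2 : ℝ) : ℂ) * ((Real.sqrt 2 : ℝ) : ℂ) = 2 := by
  rw [← Complex.ofReal_mul, Real.mul_self_sqrt (by norm_num)]
  norm_num

lemma cross_term (n : ℕ) (p φ : Fin (n + 1) → ℝ) :
    aCoef n (fun j => p j.castSucc) (fun j => φ j.castSucc) *
      bCoef 1 (fun _ => p (Fin.last n)) (fun _ => φ (Fin.last n))
    = -(1 / 2 : ℂ) * ∑ i : Fin n,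
        ((p i.castSucc : ℝ) : ℂ) * ((p (Fin.last n) : ℝ) : ℂ) *
          Complex.exp (Complex.I * (((φ i.castSucc : ℝ) : ℂ) - ((φ (Fin.last n) : ℝ) : ℂ))) := by
  unfold aCoef bCoef
  rw [Fin.sum_univ_one]
  have key : ∀ x y : ℂ, (-(Complex.I / ((Real.sqrt 2 : ℝ) : ℂ)) * x) *
      (-(Complex.I / ((Real.sqrt 2 : ℝ) : ℂ)) * y)
      = (Complex.I * Complex.I) / (((Real.sqrt 2 : ℝ) : ℂ) * ((Real.sqrt 2 : ℝ) : ℂ)) * (x * y) := by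
    intro x y
    ring
  rw [key, Complex.I_mul_I, sqrt2_sq, Finset.sum_mul]
  rw [show ((-1 : ℂ)) / 2 = -(1/2 : ℂ) from by norm_num]
  congr 1
  refine Finset.sum_congr rfl fun i _ => ?_
  have hexp : Complex.exp (Complex.I * ((φ i.castSucc : ℝ) : ℂ)) *
      Complex.exp (-Complex.I * ((φ (Fin.last n) : ℝ) : ℂ))
      = Complex.exp (Complex.I * (((φ i.castSucc : ℝ) : ℂ) - ((φ (Fin.last n) : ℝ) : ℂ))) := by
    rw [← Complex.exp_add]
    congr 1
    ring
  beta_reduce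
  rw [← hexp]
  ring

lemma Eexp_add (n : ℕ) (p φ : Fin (n + 1) → ℝ) :
    Eexp (n + 1) p φ = Eexp n (fun j => p j.castSucc) (fun j => φ j.castSucc) +
      Eexp 1 (fun _ => p (Fin.last n)) (fun _ => φ (Fin.last n)) +
      aCoef n (fun j => p j.castSucc) (fun j => φ j.castSucc) *
        bCoef 1 (fun _ => p (Fin.last n)) (fun _ => φ (Fin.last n)) := by
  rw [cross_term]
  unfold Eexp
  rw [Fin.sum_univ_castSucc (f := fun j => ((p j : ℝ) : ℂ) ^ 2)]
  rw [Fin.sum_univ_castSucc (f := fun j : Fin (n+1) => ∑ i : Fin (n+1),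
    if i < j then ((p i : ℝ) : ℂ) * ((p j : ℝ) : ℂ) *
      Complex.exp (Complex.I * (((φ i : ℝ) : ℂ) - ((φ j : ℝ) : ℂ))) else 0)]
  have inner1 : ∀ j : Fin n, (∑ i : Fin (n+1),
      if i < j.castSucc then ((p i : ℝ) : ℂ) * ((p j.castSucc : ℝ) : ℂ) *
        Complex.exp (Complex.I * (((φ i : ℝ) : ℂ) - ((φ j.castSucc : ℝ) : ℂ))) else 0)
      = ∑ i : Fin n, (if i < j then ((p i.castSucc : ℝ) : ℂ) * ((p j.castSucc : ℝ) : ℂ) *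
        Complex.exp (Complex.I * (((φ i.castSucc : ℝ) : ℂ) - ((φ j.castSucc : ℝ) : ℂ))) else 0) := by
    intro j
    rw [Fin.sum_univ_castSucc]
    simp [Fin.castSucc_lt_castSucc_iff, (Fin.castSucc_lt_last j).asymm]
  have inner2 : (∑ i : Fin (n+1),
      if i < Fin.last n then ((p i : ℝ) : ℂ) * ((p (Fin.last n) : ℝ) : ℂ) *
        Complex.exp (Complex.I * (((φ i : ℝ) : ℂ) - ((φ (Fin.last n) : ℝ) : ℂ))) else 0)
      = ∑ i : Fin n, ((p i.castSucc : ℝ) : ℂ) * ((p (Fin.last n) : ℝ) : ℂ) *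
        Complex.exp (Complex.I * (((φ i.castSucc : ℝ) : ℂ) - ((φ (Fin.last n) : ℝ) : ℂ))) := by
    rw [Fin.sum_univ_castSucc]
    simp [Fin.castSucc_lt_last]
  rw [Finset.sum_congr rfl (fun j _ => inner1 j), inner2]
  simp only [Fin.sum_univ_one]
  rw [if_neg (lt_irrefl _)]
  ring

theorem limF_factorization (n : ℕ) (hn : 1 ≤ n) (p φ : Fin (n + 1) → ℝ)
    (hp : ∀ j, p j ≠ 0) (k l : ℕ) :
    Summable (fun m : ℕ =>
      ‖limF n (fun j => p j.castSucc) (fun j => φ j.castSucc) k m *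
        limF 1 (fun _ => p (Fin.last n)) (fun _ => φ (Fin.last n)) m l‖) ∧
    ∑' m : ℕ, limF n (fun j => p j.castSucc) (fun j => φ j.castSucc) k m *
        limF 1 (fun _ => p (Fin.last n)) (fun _ => φ (Fin.last n)) m l =
      limF (n + 1) p φ k l := by
  set pc : Fin n → ℝ := fun j => p j.castSucc with hpc
  set φc : Fin n → ℝ := fun j => φ j.castSucc with hφc
  set pl : Fin 1 → ℝ := fun _ => p (Fin.last n) with hpl
  set φl : Fin 1 → ℝ := fun _ => φ (Fin.last n) with hφl
  set a := aCoef n pc φc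
  set b := bCoef n pc φc
  set c := aCoef 1 pl φl
  set d := bCoef 1 pl φl
  set E₁ := Eexp n pc φc
  set E₂ := Eexp 1 pl φl
  set C : ℂ := Complex.exp E₁ * Complex.exp E₂ *
    ((Real.sqrt (k.factorial * l.factorial) : ℝ) : ℂ) with hC
  have hfun : ∀ m : ℕ, limF n pc φc k m * limF 1 pl φl m l
      = C * ((m.factorial : ℂ) * uF a b k m * uF c d m l) := by
    intro m
    rw [limF_eq, limF_eq, hC]
    rw [show Complex.exp E₁ * ((Real.sqrt (k.factorial * m.factorial) : ℝ) : ℂ) * uF a b k m *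
        (Complex.exp E₂ * ((Real.sqrt (m.factorial * l.factorial) : ℝ) : ℂ) * uF c d m l)
      = Complex.exp E₁ * Complex.exp E₂ *
        (((Real.sqrt (k.factorial * m.factorial) : ℝ) : ℂ) *
          ((Real.sqrt (m.factorial * l.factorial) : ℝ) : ℂ)) * (uF a b k m * uF c d m l) from by
      ring]
    rw [sqrt_fact_mul]
    ring
  constructor
  · refine Summable.congr ((core_norm a b c d k l).mul_left ‖C‖) fun m => ?_
    rw [hfun m]
    exact (norm_mul _ _).symm
  · have hs := (core a b c d k l).mul_left C
    rw [tsum_congr hfun, hs.tsum_eq]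
    rw [limF_eq (n + 1) p φ k l,
      show aCoef (n + 1) p φ = a + c from aCoef_succ n p φ,
      show bCoef (n + 1) p φ = b + d from bCoef_succ n p φ,
      show Eexp (n + 1) p φ = E₁ + E₂ + a * d from Eexp_add n p φ,
      Complex.exp_add, Complex.exp_add, hC]
    ring
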